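/- Let f be a measurable real-valued function on a probability space (Ω, A, P) such that P(|f| > z) ≤ c/z² for all z > 0, for some constant c > 0, and let β⁻¹ : (0,1) → [0,∞) be a nonincreasing function satisfying β⁻¹(u) ≤ u^b for all u ∈ (0,1) and some b > 0. Then ‖f‖²_{2,β} := ∫₀¹ β⁻¹(u) Q_f²(u) du ≤ c/b. -/

import Mathlib

open MeasureTheory Filter
open scoped ENNReal NNReal Topology BigOperators

noncomputable section

/-- The cadlag inverse of the tail function `z ↦ P(|f| > z)`:
`Q_f(u) = inf {z ≥ 0 : P(|f| > z) ≤ u}`. -/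
def tailQuantile {Ω : Type*} [MeasurableSpace Ω] (P : Measure Ω) (f : Ω → ℝ) (u : ℝ) : ℝ :=
  sInf {z : ℝ | 0 ≤ z ∧ (P {ω | z < |f ω|}).toReal ≤ u}

/-- If `P(|f| > z) ≤ c/z²` for all `z > 0` and `β⁻¹` is a nonincreasing function on `(0,1)`
with `0 ≤ β⁻¹(u) ≤ u^b`, then the Doukhan–Massart–Rio norm satisfies
`‖f‖²_{2,β} = ∫₀¹ β⁻¹(u) Q_f²(u) du ≤ c/b`. -/
theorem dmr_norm_sq_le_of_tail_bound
    {Ω : Type*} [MeasurableSpace Ω] (P : Measure Ω) [IsProbabilityMeasure P]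
    (f : Ω → ℝ) (hf : Measurable f)
    (c : ℝ) (hc : 0 < c)
    (htail : ∀ z : ℝ, 0 < z → (P {ω | z < |f ω|}).toReal ≤ c / z ^ 2)
    (βinv : ℝ → ℝ) (b : ℝ) (hb : 0 < b)
    (hβanti : AntitoneOn βinv (Set.Ioo 0 1))
    (hβnonneg : ∀ u ∈ Set.Ioo (0 : ℝ) 1, 0 ≤ βinv u)
    (hβle : ∀ u ∈ Set.Ioo (0 : ℝ) 1, βinv u ≤ u ^ b) :
    ∫ u in Set.Ioo (0 : ℝ) 1, βinv u * tailQuantile P f u ^ 2 ≤ c / b := by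
  -- pointwise bound on the quantile
  have hQ : ∀ u ∈ Set.Ioo (0 : ℝ) 1, tailQuantile P f u ^ 2 ≤ c / u := by
    intro u hu
    set z₀ : ℝ := Real.sqrt (c / u) with hz₀def
    have hcu : 0 < c / u := div_pos hc hu.1
    have hz₀pos : 0 < z₀ := Real.sqrt_pos.mpr hcu
    have hz₀sq : z₀ ^ 2 = c / u := Real.sq_sqrt hcu.le
    have hz₀mem : z₀ ∈ {z : ℝ | 0 ≤ z ∧ (P {ω | z < |f ω|}).toReal ≤ u} := by
      refine ⟨hz₀pos.le, ?_⟩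
      have h := htail z₀ hz₀pos
      rw [hz₀sq] at h
      have heq : c / (c / u) = u := by
        field_simp
      rwa [heq] at h
    have hbdd : BddBelow {z : ℝ | 0 ≤ z ∧ (P {ω | z < |f ω|}).toReal ≤ u} :=
      ⟨0, fun x hx => hx.1⟩
    have hQle : tailQuantile P f u ≤ z₀ := csInf_le hbdd hz₀mem
    have hQnonneg : 0 ≤ tailQuantile P f u :=
      le_csInf ⟨z₀, hz₀mem⟩ fun x hx => hx.1
    calc tailQuantile P f u ^ 2 ≤ z₀ ^ 2 := by
          apply pow_le_pow_left₀ hQnonneg hQle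
      _ = c / u := hz₀sq
  -- the dominating function
  have hg : IntegrableOn (fun u : ℝ => c * u ^ (b - 1)) (Set.Ioo 0 1) := by
    have h1 : IntervalIntegrable (fun u : ℝ => u ^ (b - 1)) volume 0 1 :=
      intervalIntegral.intervalIntegrable_rpow' (by linarith)
    have h2 : IntegrableOn (fun u : ℝ => u ^ (b - 1)) (Set.Ioc 0 1) :=
      (intervalIntegrable_iff_integrableOn_Ioc_of_le zero_le_one).mp h1
    exact (h2.mono_set Set.Ioo_subset_Ioc_self).const_mul c
  have hmono : ∀ u ∈ Set.Ioo (0 : ℝ) 1,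
      βinv u * tailQuantile P f u ^ 2 ≤ c * u ^ (b - 1) := by
    intro u hu
    have hub : (0:ℝ) ≤ u ^ b := Real.rpow_nonneg hu.1.le b
    have : βinv u * tailQuantile P f u ^ 2 ≤ u ^ b * (c / u) :=
      mul_le_mul (hβle u hu) (hQ u hu) (sq_nonneg _) hub
    refine this.trans_eq ?_
    rw [Real.rpow_sub hu.1, Real.rpow_one]
    ring
  have hnn : ∀ u ∈ Set.Ioo (0 : ℝ) 1, 0 ≤ βinv u * tailQuantile P f u ^ 2 :=
    fun u hu => mul_nonneg (hβnonneg u hu) (sq_nonneg _)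
  have key : ∫ u in Set.Ioo (0 : ℝ) 1, βinv u * tailQuantile P f u ^ 2 ≤
      ∫ u in Set.Ioo (0 : ℝ) 1, c * u ^ (b - 1) := by
    apply integral_mono_of_nonneg
    · filter_upwards [ae_restrict_mem measurableSet_Ioo] with u hu using hnn u hu
    · exact hg
    · filter_upwards [ae_restrict_mem measurableSet_Ioo] with u hu using hmono u hu
  refine key.trans ?_
  have : ∫ u in Set.Ioo (0 : ℝ) 1, c * u ^ (b - 1) = c / b := by
    rw [← integral_Ioc_eq_integral_Ioo, ← intervalIntegral.integral_of_le zero_le_one,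
      intervalIntegral.integral_const_mul, integral_rpow (Or.inl (by linarith))]
    rw [sub_add_cancel, Real.one_rpow, Real.zero_rpow hb.ne']
    field_simp
    norm_num
  rw [this]

end
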